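/- (Theorem 3.1, uniqueness of the minimal imputation set for SVM) Consider a feature matrix X ∈ ℝ^{n×d} with missing entries constrained to closed intervals, labels y ∈ {−1,+1}ⁿ, and regularization parameter C > 0. If S and S′ are both minimal imputation sets for SVM over (X, y, C), then S = S′; i.e., the minimal imputation set is unique. -/
import Mathlib


/-- Soft-margin SVM loss over data `(X, y)` with regularization parameter `C`. -/
noncomputable def svmLoss {n d : ℕ} (C : ℝ) (X : Fin n → Fin d → ℝ)
    (y : Fin n → ℝ) (w : Fin d → ℝ) : ℝ :=
  (1 / 2) * ∑ j, (w j) ^ 2 + C * ∑ i, max 0 (1 - y i * ∑ j, w j * X i j)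

/-- `Xr` is a repair of `X` w.r.t. the missing-entry set `M` and interval bounds `a`, `b`:
it agrees with `X` on non-missing entries and assigns each missing entry `(i,j)` a value
in `[a i j, b i j]`. -/
def IsRepair {n d : ℕ} (M : Set (Fin n × Fin d)) (a b X Xr : Fin n → Fin d → ℝ) : Prop :=
  (∀ i j, (i, j) ∉ M → Xr i j = X i j) ∧
  (∀ i j, (i, j) ∈ M → Xr i j ∈ Set.Icc (a i j) (b i j))

/-- An edge repair is a repair in which every missing entry takes an endpoint
of its interval. -/
def IsEdgeRepair {n d : ℕ} (M : Set (Fin n × Fin d)) (a b X Xr : Fin n → Fin d → ℝ) : Prop :=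
  IsRepair M a b X Xr ∧ ∀ i j, (i, j) ∈ M → Xr i j = a i j ∨ Xr i j = b i j

/-- Example `i` is incomplete if its row contains a missing entry. -/
def IncompleteExample {n d : ℕ} (M : Set (Fin n × Fin d)) (i : Fin n) : Prop :=
  ∃ j, (i, j) ∈ M

/-- A certain model: `w` minimizes the SVM loss over every repair of `X`. -/
def CertainModel {n d : ℕ} (C : ℝ) (M : Set (Fin n × Fin d))
    (a b X : Fin n → Fin d → ℝ) (y : Fin n → ℝ) (w : Fin d → ℝ) : Prop :=
  ∀ Xr, IsRepair M a b X Xr → ∀ w', svmLoss C Xr y w ≤ svmLoss C Xr y w'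

/-- A set `S` of examples is imputation-sufficient if for every assignment of values
(within the prescribed intervals) to the missing entries of examples in `S`, the
resulting data (remaining missing entries `{p ∈ M | p.1 ∉ S}`) admits a certain model. -/
def ImputationSufficient {n d : ℕ} (C : ℝ) (M : Set (Fin n × Fin d))
    (a b X : Fin n → Fin d → ℝ) (y : Fin n → ℝ) (S : Finset (Fin n)) : Prop :=
  ∀ ρ : Fin n → Fin d → ℝ,
    (∀ i j, (i, j) ∈ M → i ∈ S → ρ i j ∈ Set.Icc (a i j) (b i j)) →
    (∀ i j, ¬((i, j) ∈ M ∧ i ∈ S) → ρ i j = X i j) →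
    ∃ w, CertainModel C {p ∈ M | p.1 ∉ S} a b ρ y w

/-- A minimal imputation set: an imputation-sufficient set of incomplete examples
of minimum cardinality. -/
def MinimalImputationSet {n d : ℕ} (C : ℝ) (M : Set (Fin n × Fin d))
    (a b X : Fin n → Fin d → ℝ) (y : Fin n → ℝ) (S : Finset (Fin n)) : Prop :=
  (∀ i ∈ S, IncompleteExample M i) ∧
  ImputationSufficient C M a b X y S ∧
  ∀ S' : Finset (Fin n), (∀ i ∈ S', IncompleteExample M i) →
    ImputationSufficient C M a b X y S' → S.card ≤ S'.card

/-- Strict convexity: two minimizers of the SVM loss coincide. -/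
lemma svm_min_unique {n d : ℕ} {C : ℝ} (hC : 0 < C) (Xr : Fin n → Fin d → ℝ)
    (y : Fin n → ℝ) {w w' : Fin d → ℝ}
    (hw : ∀ v, svmLoss C Xr y w ≤ svmLoss C Xr y v)
    (hw' : ∀ v, svmLoss C Xr y w' ≤ svmLoss C Xr y v) : w = w' := by
  set m : Fin d → ℝ := fun j => (w j + w' j) / 2 with hm
  -- hinge bound per example
  have hdot : ∀ i, ∑ j, m j * Xr i j
      = ((∑ j, w j * Xr i j) + ∑ j, w' j * Xr i j) / 2 := by
    intro i
    rw [← Finset.sum_add_distrib, Finset.sum_div]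
    exact Finset.sum_congr rfl fun j _ => by simp [hm]; ring
  have hhinge : ∀ i, max 0 (1 - y i * ∑ j, m j * Xr i j)
      ≤ (max 0 (1 - y i * ∑ j, w j * Xr i j)
        + max 0 (1 - y i * ∑ j, w' j * Xr i j)) / 2 := by
    intro i
    rw [hdot i]
    set A := ∑ j, w j * Xr i j
    set B := ∑ j, w' j * Xr i j
    have hA : (1 : ℝ) - y i * A ≤ max 0 (1 - y i * A) := le_max_right _ _
    have hB : (1 : ℝ) - y i * B ≤ max 0 (1 - y i * B) := le_max_right _ _
    have hA0 : (0 : ℝ) ≤ max 0 (1 - y i * A) := le_max_left _ _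
    have hB0 : (0 : ℝ) ≤ max 0 (1 - y i * B) := le_max_left _ _
    have key : 1 - y i * ((A + B) / 2) = ((1 - y i * A) + (1 - y i * B)) / 2 := by ring
    rw [key]
    apply max_le
    · linarith
    · linarith
  have hquad : ∑ j, m j ^ 2
      = ((∑ j, w j ^ 2) + ∑ j, w' j ^ 2) / 2 - (∑ j, (w j - w' j) ^ 2) / 4 := by
    have h : ∀ j : Fin d, m j ^ 2 = (w j ^ 2 + w' j ^ 2) / 2 - (w j - w' j) ^ 2 / 4 :=
      fun j => by simp only [hm]; ring
    rw [Finset.sum_congr rfl fun j _ => h j, Finset.sum_sub_distrib,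
      ← Finset.sum_div, ← Finset.sum_div, Finset.sum_add_distrib]
  have hsum : ∑ i, max 0 (1 - y i * ∑ j, m j * Xr i j)
      ≤ ∑ i, (max 0 (1 - y i * ∑ j, w j * Xr i j)
        + max 0 (1 - y i * ∑ j, w' j * Xr i j)) / 2 :=
    Finset.sum_le_sum fun i _ => hhinge i
  have hCsum := mul_le_mul_of_nonneg_left hsum hC.le
  have hsplit : ∑ i, (max 0 (1 - y i * ∑ j, w j * Xr i j)
        + max 0 (1 - y i * ∑ j, w' j * Xr i j)) / 2
      = ((∑ i, max 0 (1 - y i * ∑ j, w j * Xr i j))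
        + ∑ i, max 0 (1 - y i * ∑ j, w' j * Xr i j)) / 2 := by
    rw [← Finset.sum_div, Finset.sum_add_distrib]
  have hLm : svmLoss C Xr y m
      ≤ (svmLoss C Xr y w + svmLoss C Xr y w') / 2 - (∑ j, (w j - w' j) ^ 2) / 8 := by
    unfold svmLoss
    rw [hsplit] at hCsum
    rw [hquad]
    nlinarith [hCsum]
  have h1 : svmLoss C Xr y w ≤ svmLoss C Xr y m := hw m
  have h2 : svmLoss C Xr y w' ≤ svmLoss C Xr y w := hw' w
  have h3 : svmLoss C Xr y w ≤ svmLoss C Xr y w' := hw w'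
  have hD0 : ∑ j, (w j - w' j) ^ 2 ≤ 0 := by linarith
  have hDnn : (0 : ℝ) ≤ ∑ j, (w j - w' j) ^ 2 :=
    Finset.sum_nonneg fun j _ => sq_nonneg _
  have hD : ∑ j, (w j - w' j) ^ 2 = 0 := le_antisymm hD0 hDnn
  funext j
  have := (Finset.sum_eq_zero_iff_of_nonneg (fun j _ => sq_nonneg (w j - w' j))).mp hD j
    (Finset.mem_univ j)
  have := pow_eq_zero_iff (n := 2) (by norm_num) |>.mp this
  linarith [this]

lemma inter_sufficient {n d : ℕ} {C : ℝ} (hC : 0 < C)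
    {M : Set (Fin n × Fin d)} {a b X : Fin n → Fin d → ℝ} {y : Fin n → ℝ}
    (hab : ∀ i j, (i, j) ∈ M → a i j ≤ b i j)
    {S S' : Finset (Fin n)}
    (hSs : ImputationSufficient C M a b X y S)
    (hS's : ImputationSufficient C M a b X y S') :
    ImputationSufficient C M a b X y (S ∩ S') := by
  classical
  intro ρ hρ1 hρ2
  set T : Finset (Fin n) := S ∩ S' with hT
  -- canonical imputation for S' rows
  set σ : Fin n → Fin d → ℝ := fun i j =>
    if (i, j) ∈ M ∧ i ∈ S' then (if i ∈ S then ρ i j else a i j) else X i j with hσ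
  have hσ1 : ∀ i j, (i, j) ∈ M → i ∈ S' → σ i j ∈ Set.Icc (a i j) (b i j) := by
    intro i j hM hi
    by_cases hiS : i ∈ S
    · simp only [hσ, hM, hi, hiS, and_true, if_true]
      exact hρ1 i j hM (Finset.mem_inter.mpr ⟨hiS, hi⟩)
    · simp only [hσ, hM, hi, hiS, and_true, if_true, if_false]
      exact ⟨le_refl _, hab i j hM⟩
  have hσ2 : ∀ i j, ¬((i, j) ∈ M ∧ i ∈ S') → σ i j = X i j := by
    intro i j h; simp only [hσ, if_neg h]
  obtain ⟨w₂, hw₂⟩ := hS's σ hσ1 hσ2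
  refine ⟨w₂, ?_⟩
  intro Z hZ w'
  -- imputation for S rows using Z's values on S \ T
  set τ : Fin n → Fin d → ℝ := fun i j =>
    if (i, j) ∈ M ∧ i ∈ S then (if i ∈ T then ρ i j else Z i j) else X i j with hτ
  have hZIcc : ∀ i j, (i, j) ∈ M → i ∉ T → Z i j ∈ Set.Icc (a i j) (b i j) := by
    intro i j hM hiT
    exact hZ.2 i j (by simp only [Set.mem_setOf_eq]; exact ⟨hM, hiT⟩)
  have hτ1 : ∀ i j, (i, j) ∈ M → i ∈ S → τ i j ∈ Set.Icc (a i j) (b i j) := by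
    intro i j hM hi
    by_cases hiT : i ∈ T
    · simp only [hτ, hM, hi, hiT, and_true, if_true]
      exact hρ1 i j hM hiT
    · simp only [hτ, hM, hi, hiT, and_true, if_true, if_false]
      exact hZIcc i j hM hiT
  have hτ2 : ∀ i j, ¬((i, j) ∈ M ∧ i ∈ S) → τ i j = X i j := by
    intro i j h; simp only [hτ, if_neg h]
  obtain ⟨wz, hwz⟩ := hSs τ hτ1 hτ2
  -- Z is a repair of (τ, rows outside S)
  have hρX : ∀ i j, (i, j) ∉ M → ρ i j = X i j := by
    intro i j h; exact hρ2 i j (fun hc => h hc.1)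
  have hZτ : IsRepair {p ∈ M | p.1 ∉ S} a b τ Z := by
    constructor
    · intro i j h
      simp only [Set.mem_setOf_eq, not_and, not_not] at h
      by_cases hM : (i, j) ∈ M
      · have hiS : i ∈ S := h hM
        by_cases hiT : i ∈ T
        · simp only [hτ, hM, hiS, hiT, and_true, if_true]
          exact hZ.1 i j (by simp only [Set.mem_setOf_eq]; tauto)
        · simp only [hτ, hM, hiS, hiT, and_true, if_true, if_false]
      · rw [hτ2 i j (fun hc => hM hc.1)]
        rw [hZ.1 i j (by simp only [Set.mem_setOf_eq]; tauto)]
        exact hρX i j hM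
    · intro i j h
      simp only [Set.mem_setOf_eq] at h
      exact hZIcc i j h.1 (fun hiT => h.2 (Finset.mem_inter.mp hiT).1)
  -- common repair Y
  set Y : Fin n → Fin d → ℝ := fun i j =>
    if (i, j) ∈ M then
      (if i ∈ T then ρ i j else if i ∈ S then Z i j else a i j)
    else X i j with hY
  have hY1 : IsRepair {p ∈ M | p.1 ∉ S} a b τ Y := by
    constructor
    · intro i j h
      simp only [Set.mem_setOf_eq, not_and, not_not] at h
      by_cases hM : (i, j) ∈ M
      · have hiS : i ∈ S := h hM
        by_cases hiT : i ∈ T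
        · simp only [hY, hτ, hM, hiS, hiT, and_true, if_true]
        · simp only [hY, hτ, hM, hiS, hiT, and_true, if_true, if_false]
      · simp only [hY, if_neg hM]
        rw [hτ2 i j (fun hc => hM hc.1)]
    · intro i j h
      simp only [Set.mem_setOf_eq] at h
      have hiT : i ∉ T := fun hiT => h.2 (Finset.mem_inter.mp hiT).1
      simp only [hY, h.1, h.2, hiT, if_true, if_false]
      exact ⟨le_refl _, hab i j h.1⟩
  have hY2 : IsRepair {p ∈ M | p.1 ∉ S'} a b σ Y := by
    constructor
    · intro i j h
      simp only [Set.mem_setOf_eq, not_and, not_not] at h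
      by_cases hM : (i, j) ∈ M
      · have hiS' : i ∈ S' := h hM
        by_cases hiT : i ∈ T
        · have hiS : i ∈ S := (Finset.mem_inter.mp hiT).1
          simp only [hY, hσ, hM, hiS', hiS, hiT, and_true, if_true]
        · have hiS : i ∉ S := fun hiS => hiT (Finset.mem_inter.mpr ⟨hiS, hiS'⟩)
          simp only [hY, hσ, hM, hiS', hiS, hiT, and_true, if_true, if_false]
      · simp only [hY, if_neg hM]
        rw [hσ2 i j (fun hc => hM hc.1)]
    · intro i j h
      simp only [Set.mem_setOf_eq] at h
      have hiT : i ∉ T := fun hiT => h.2 (Finset.mem_inter.mp hiT).2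
      by_cases hiS : i ∈ S
      · simp only [hY, h.1, hiT, hiS, if_true, if_false]
        exact hZIcc i j h.1 hiT
      · simp only [hY, h.1, hiT, hiS, if_true, if_false]
        exact ⟨le_refl _, hab i j h.1⟩
  have heq : wz = w₂ := svm_min_unique hC Y y (hwz Y hY1) (hw₂ Y hY2)
  exact heq ▸ hwz Z hZτ w'

/-- Theorem 3.1: the minimal imputation set for SVM is unique. -/
theorem minimal_imputation_set_unique_svm
    (n d : ℕ) (X : Fin n → Fin d → ℝ) (M : Set (Fin n × Fin d))
    (a b : Fin n → Fin d → ℝ) (hab : ∀ i j, (i, j) ∈ M → a i j ≤ b i j)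
    (y : Fin n → ℝ) (hy : ∀ i, y i = 1 ∨ y i = -1) (C : ℝ) (hC : 0 < C)
    (S S' : Finset (Fin n))
    (hS : MinimalImputationSet C M a b X y S)
    (hS' : MinimalImputationSet C M a b X y S') :
    S = S' := by
  
  have hTs := inter_sufficient hC hab hS.2.1 hS'.2.1
  have hTinc : ∀ i ∈ S ∩ S', IncompleteExample M i :=
    fun i hi => hS.1 i (Finset.mem_inter.mp hi).1
  have h1 : S.card ≤ (S ∩ S').card := hS.2.2 _ hTinc hTs
  have h2 : S'.card ≤ (S ∩ S').card := hS'.2.2 _ hTinc hTs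
  have e1 : S ∩ S' = S := Finset.eq_of_subset_of_card_le Finset.inter_subset_left h1
  have e2 : S ∩ S' = S' := Finset.eq_of_subset_of_card_le Finset.inter_subset_right h2
  rw [← e1, e2]
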